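/- If the composition condition holds for the Abel equation dy/dx = p(x)y² + q(x)y³ on [a,b] — i.e. there exist polynomials w, p₁, q₁ with w(a)=w(b), p̃ = p₁∘w, q̃ = q₁∘w — then every iterated integral I_{i₁,…,i_k} = ∫···∫_{a ≤ s₁ ≤ ··· ≤ s_k ≤ b} a_{i_k}(s_k)···a_{i₁}(s₁) ds_k···ds₁ vanishes, where a₁ = p and a₂ = q and k ≥ 1. -/

import Mathlib

open MeasureTheory

/-- Iterated integral over the simplex `a ≤ s₁ ≤ ⋯ ≤ s_k ≤ t`:
the list is `[a_{i_k}, …, a_{i_1}]`, outermost variable first. -/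
noncomputable def iterInt (a : ℝ) : List (ℝ → ℝ) → ℝ → ℝ
  | [], _ => 1
  | f :: rest, t => ∫ s in a..t, f s * iterInt a rest s

/-- Every polynomial has a polynomial antiderivative. -/
lemma exists_antideriv (S : Polynomial ℝ) : ∃ T : Polynomial ℝ, T.derivative = S := by
  induction S using Polynomial.induction_on' with
  | add r s hr hs =>
    obtain ⟨T, hT⟩ := hr; obtain ⟨U, hU⟩ := hs
    exact ⟨T + U, by simp [hT, hU]⟩
  | monomial n c =>
    refine ⟨Polynomial.C (c / (n + 1)) * Polynomial.X ^ (n + 1), ?_⟩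
    have hn : ((n : ℝ) + 1) ≠ 0 := by positivity
    rw [Polynomial.derivative_C_mul, Polynomial.derivative_X_pow, Nat.add_sub_cancel,
      Nat.cast_add, Nat.cast_one, ← mul_assoc, ← Polynomial.C_mul, div_mul_cancel₀ _ hn,
      Polynomial.C_mul_X_pow_eq_monomial]

/-- FTC for polynomials. -/
lemma integral_eval_derivative (D : Polynomial ℝ) (a t : ℝ) :
    ∫ s in a..t, D.derivative.eval s = D.eval t - D.eval a := by
  apply intervalIntegral.integral_eq_sub_of_hasDerivAt
  · exact fun x _ => D.hasDerivAt x
  · exact D.derivative.continuous.intervalIntegrable _ _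

theorem composition_implies_universal_center
    (p q : Polynomial ℝ) (a b : ℝ) (hab : a < b)
    (w p₁ q₁ : Polynomial ℝ)
    (hw : w.eval a = w.eval b)
    (hp : ∀ x : ℝ, (∫ σ in a..x, p.eval σ) = p₁.eval (w.eval x))
    (hq : ∀ x : ℝ, (∫ σ in a..x, q.eval σ) = q₁.eval (w.eval x)) :
    ∀ l : List (ℝ → ℝ), l ≠ [] →
      (∀ f ∈ l, f = (fun s => p.eval s) ∨ f = (fun s => q.eval s)) →
      iterInt a l b = 0 := by
  -- Step 1: `p = derivative (p₁.comp w)`, similarly for `q`.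
  have key : ∀ r r₁ : Polynomial ℝ,
      (∀ x : ℝ, (∫ σ in a..x, r.eval σ) = r₁.eval (w.eval x)) →
      (r₁.comp w).derivative = r := by
    intro r r₁ h
    obtain ⟨D, hD⟩ := exists_antideriv r
    have hcomp : r₁.comp w = D - Polynomial.C (D.eval a) := by
      apply Polynomial.funext
      intro x
      rw [Polynomial.eval_comp, ← h x, ← hD, integral_eval_derivative]
      simp
    rw [hcomp]
    simp [hD]
  have hp' := key p p₁ hp
  have hq' := key q q₁ hq
  -- Step 2: every iterated integral is `P(w(t))` for a polynomial `P` with `P(w(a)) = 0`.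
  have claim : ∀ l : List (ℝ → ℝ),
      (∀ f ∈ l, f = (fun s => p.eval s) ∨ f = (fun s => q.eval s)) →
      ∃ P : Polynomial ℝ, (∀ t, iterInt a l t = P.eval (w.eval t)) ∧
        (l ≠ [] → P.eval (w.eval a) = 0) := by
    intro l
    induction l with
    | nil => exact fun _ => ⟨1, fun t => by simp [iterInt], by simp⟩
    | cons f rest ih =>
      intro hmem
      obtain ⟨Q, hQ, -⟩ := ih (fun g hg => hmem g (List.mem_cons_of_mem _ hg))
      have step : ∀ (r r₁ : Polynomial ℝ), (r₁.comp w).derivative = r →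
          f = (fun s => r.eval s) →
          ∃ P : Polynomial ℝ, (∀ t, iterInt a (f :: rest) t = P.eval (w.eval t)) ∧
            (f :: rest ≠ [] → P.eval (w.eval a) = 0) := by
        intro r r₁ hr hf
        obtain ⟨T, hT⟩ := exists_antideriv (Q * r₁.derivative)
        refine ⟨T - Polynomial.C (T.eval (w.eval a)), ?_, fun _ => by simp⟩
        intro t
        have hder : ((T - Polynomial.C (T.eval (w.eval a))).comp w).derivative
            = Q.comp w * r := by
          rw [Polynomial.sub_comp, Polynomial.C_comp, Polynomial.derivative_sub,
            Polynomial.derivative_C, sub_zero, Polynomial.derivative_comp, hT,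
            Polynomial.mul_comp, ← hr, Polynomial.derivative_comp]
          ring
        have : iterInt a (f :: rest) t
            = ∫ s in a..t, (((T - Polynomial.C (T.eval (w.eval a))).comp w).derivative).eval s := by
          show (∫ s in a..t, f s * iterInt a rest s) = _
          apply intervalIntegral.integral_congr
          intro s _
          show f s * iterInt a rest s = Polynomial.eval s _
          rw [hQ s, hder, hf]
          simp [Polynomial.eval_comp, mul_comm]
        rw [this, integral_eval_derivative]
        simp [Polynomial.eval_comp]
      rcases hmem f List.mem_cons_self with hf | hf
      · exact step p p₁ hp' hf
      · exact step q q₁ hq' hf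
  intro l hl hmem
  obtain ⟨P, hP, hP0⟩ := claim l hmem
  rw [hP b, ← hw, hP0 hl]
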